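/- A ring R is GSWNC if and only if J(R) is nil and R/J(R) is GSWNC. -/

import Mathlib

/-- An element is strongly weakly nil-clean. -/
def IsSWNC {R : Type*} [Ring R] (a : R) : Prop :=
  ∃ q e : R, IsNilpotent q ∧ IsIdempotentElem e ∧ Commute q e ∧ (a = q + e ∨ a = q - e)

/-- A ring is GSWNC if every non-unit is strongly weakly nil-clean. -/
def IsGSWNC (R : Type*) [Ring R] : Prop :=
  ∀ a : R, ¬ IsUnit a → IsSWNC a

open Polynomial in
/-- If `a - a²` is nilpotent then `a` is strongly nil-clean. -/
lemma snc_of_isNilpotent_sub_sq {R : Type*} [Ring R] {a : R}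
    (h : IsNilpotent (a - a ^ 2)) :
    ∃ q e : R, IsNilpotent q ∧ IsIdempotentElem e ∧ Commute q e ∧ a = q + e := by
  obtain ⟨n, hn⟩ := h
  rcases n with _ | n
  · have h1 : (1 : R) = 0 := by simpa using hn
    have ha : a = 0 := by rw [← mul_one a, h1, mul_zero]
    exact ⟨0, 0, .zero, by simp [IsIdempotentElem], Commute.refl 0, by simp [ha]⟩
  set m := n + 1 with hm
  set e : R := 1 - (1 - a ^ m) ^ m with he_def
  have he : IsIdempotentElem e := isIdempotentElem_one_sub_one_sub_pow_pow a m hn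
  have hae : Commute a e := by
    have h1 : Commute a ((1 - a ^ m) ^ m) :=
      ((Commute.one_right a).sub_right ((Commute.refl a).pow_right m)).pow_right m
    exact (Commute.one_right a).sub_right h1
  refine ⟨a - e, e, ?_, he, hae.sub_left (Commute.refl e), (sub_add_cancel a e).symm⟩
  -- nilpotency of a - e via polynomial divisibility
  have hXdvd : (X : ℤ[X]) ∣ X - (1 - (1 - X ^ m) ^ m) := by
    have h0 := sub_dvd_pow_sub_pow (1 : ℤ[X]) (1 - X ^ m) m
    simp only [sub_sub_cancel, one_pow] at h0
    exact dvd_sub dvd_rfl (dvd_trans (dvd_pow_self X (Nat.succ_ne_zero n)) h0)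
  have h1Xdvd : (1 - X : ℤ[X]) ∣ X - (1 - (1 - X ^ m) ^ m) := by
    have h2 : (1 - X : ℤ[X]) ∣ (1 - X ^ m) ^ m := by
      refine dvd_trans ?_ (dvd_pow_self _ (Nat.succ_ne_zero n))
      simpa using sub_dvd_pow_sub_pow (1 : ℤ[X]) X m
    have h3 : (X : ℤ[X]) - (1 - (1 - X ^ m) ^ m) = (1 - X ^ m) ^ m - (1 - X) := by ring
    rw [h3]
    exact dvd_sub h2 dvd_rfl
  have hcop : IsCoprime (X : ℤ[X]) (1 - X) := ⟨1, 1, by ring⟩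
  have hdvd : ((X - X ^ 2 : ℤ[X])) ^ m ∣ (X - (1 - (1 - X ^ m) ^ m)) ^ m := by
    have h4 : (X * (1 - X) : ℤ[X]) ∣ X - (1 - (1 - X ^ m) ^ m) :=
      hcop.mul_dvd hXdvd h1Xdvd
    have h5 : (X - X ^ 2 : ℤ[X]) = X * (1 - X) := by ring
    rw [h5]
    exact pow_dvd_pow_of_dvd h4 m
  obtain ⟨g, hg⟩ := hdvd
  have hg' := congrArg (Polynomial.aeval a) hg
  simp only [map_pow, map_sub, map_mul, map_one, aeval_X] at hg'
  refine ⟨m, ?_⟩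
  rw [he_def, hg', hn, zero_mul]

/-- If `a + a²` is nilpotent then `a = q - e` strongly. -/
lemma snc_of_isNilpotent_add_sq {R : Type*} [Ring R] {a : R}
    (h : IsNilpotent (a + a ^ 2)) :
    ∃ q e : R, IsNilpotent q ∧ IsIdempotentElem e ∧ Commute q e ∧ a = q - e := by
  have h' : IsNilpotent ((-a) - (-a) ^ 2) := by
    have h1 : (-a) - (-a) ^ 2 = -(a + a ^ 2) := by noncomm_ring
    rw [h1]; exact h.neg
  obtain ⟨q, e, hq, he, hc, hqe⟩ := snc_of_isNilpotent_sub_sq h'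
  refine ⟨-q, e, hq.neg, he, hc.neg_left, ?_⟩
  have h2 : a = -(q + e) := by rw [← hqe, neg_neg]
  rw [h2]; noncomm_ring

/-- Characterization: `a` is SWNC iff `a - a²` or `a + a²` is nilpotent. -/
lemma isSWNC_iff {R : Type*} [Ring R] (a : R) :
    IsSWNC a ↔ IsNilpotent (a - a ^ 2) ∨ IsNilpotent (a + a ^ 2) := by
  constructor
  · rintro ⟨q, e, hq, he, hc, (rfl | rfl)⟩
    · left
      have key : (q + e) - (q + e) ^ 2 = q * (1 - q - (e + e)) := by
        have expand : (q + e) - (q + e) ^ 2 = q + e - (q * q + q * e + e * q + e * e) := by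
          noncomm_ring
        rw [expand, ← hc.eq, he.eq]
        noncomm_ring
      rw [key]
      exact (((Commute.one_right q).sub_right (Commute.refl q)).sub_right
        (hc.add_right hc)).isNilpotent_mul_right hq
    · right
      have key : (q - e) + (q - e) ^ 2 = q * (1 + q - (e + e)) := by
        have expand : (q - e) + (q - e) ^ 2 = q - e + (q * q - q * e - e * q + e * e) := by
          noncomm_ring
        rw [expand, ← hc.eq, he.eq]
        noncomm_ring
      rw [key]
      exact (((Commute.one_right q).add_right (Commute.refl q)).sub_right
        (hc.add_right hc)).isNilpotent_mul_right hq
  · rintro (h | h)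
    · obtain ⟨q, e, hq, he, hc, hqe⟩ := snc_of_isNilpotent_sub_sq h
      exact ⟨q, e, hq, he, hc, Or.inl hqe⟩
    · obtain ⟨q, e, hq, he, hc, hqe⟩ := snc_of_isNilpotent_add_sq h
      exact ⟨q, e, hq, he, hc, Or.inr hqe⟩

/-- If `x` lies in a two-sided ideal contained in the Jacobson radical, `1 - x` is a unit. -/
lemma isUnit_one_sub_of_mem {R : Type*} [Ring R] (J : TwoSidedIdeal R)
    (hJ : ∀ x : R, x ∈ J → x ∈ Ideal.jacobson (⊥ : Ideal R)) {x : R} (hx : x ∈ J) :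
    IsUnit (1 - x) := by
  have key : ∀ y : R, y ∈ J → ∃ s : R, s * (1 - y) = 1 := by
    intro y hy
    have h1 : (1 - y) - 1 ∈ Ideal.jacobson (⊥ : Ideal R) := by
      have h2 : (1 - y) - 1 = -y := by abel
      rw [h2]
      exact hJ _ (J.neg_mem hy)
    obtain ⟨s, hs⟩ := Ideal.exists_mul_sub_mem_of_sub_one_mem_jacobson _ h1
    rw [Ideal.mem_bot, sub_eq_zero] at hs
    exact ⟨s, hs⟩
  obtain ⟨s, hs⟩ := key x hx
  -- s = 1 + s * x, and -(s * x) ∈ J, so s has a left inverse too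
  have hsx : -(s * x) ∈ J := J.neg_mem (J.mul_mem_left _ _ hx)
  have hs2 : s = 1 + s * x := by
    have h3 : s - s * x = 1 := by rw [← mul_one_sub]; exact hs
    rw [← h3]; abel
  have hs' : 1 - (-(s * x)) = s := by rw [sub_neg_eq_add]; exact hs2.symm
  obtain ⟨t, ht⟩ := key _ hsx
  rw [hs'] at ht
  -- t * s = 1 and s * (1 - x) = 1, hence t = 1 - x and 1 - x is a unit
  have hts : t = 1 - x := by
    calc t = t * (s * (1 - x)) := by rw [hs, mul_one]
    _ = (t * s) * (1 - x) := by rw [mul_assoc]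
    _ = 1 - x := by rw [ht, one_mul]
  exact ⟨⟨1 - x, s, by rw [← hts]; exact ht, hs⟩, rfl⟩

theorem stmt6 {R : Type*} [Ring R] (J : TwoSidedIdeal R)
    (hJ : ∀ x : R, x ∈ J ↔ x ∈ Ideal.jacobson (⊥ : Ideal R)) :
    IsGSWNC R ↔ ((∀ x ∈ J, IsNilpotent x) ∧ IsGSWNC J.ringCon.Quotient) := by
  set f : R →+* J.ringCon.Quotient := J.ringCon.mk' with hf
  have hsurj : Function.Surjective f := fun y => Quotient.inductionOn' y fun x => ⟨x, rfl⟩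
  have hker : ∀ x : R, f x = 0 ↔ x ∈ J := by
    intro x
    rw [show (0 : J.ringCon.Quotient) = f 0 by rw [map_zero]]
    exact J.ringCon.eq
  have hunit : ∀ a : R, IsUnit (f a) → IsUnit a := by
    rintro a ⟨u, hu⟩
    obtain ⟨b, hb⟩ := hsurj (↑u⁻¹)
    have hab : 1 - a * b ∈ J := by
      rw [← hker, map_sub, map_one, map_mul, ← hu, hb, Units.mul_inv, sub_self]
    have hba : 1 - b * a ∈ J := by
      rw [← hker, map_sub, map_one, map_mul, hb, ← hu, Units.inv_mul, sub_self]
    have h1 : IsUnit (a * b) := by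
      have := isUnit_one_sub_of_mem J (fun x hx => (hJ x).1 hx) hab
      simpa using this
    have h2 : IsUnit (b * a) := by
      have := isUnit_one_sub_of_mem J (fun x hx => (hJ x).1 hx) hba
      simpa using this
    obtain ⟨v, hv⟩ := h1
    obtain ⟨w, hw⟩ := h2
    have hright : a * (b * ↑v⁻¹) = 1 := by
      rw [← mul_assoc, ← hv, Units.mul_inv]
    have hleft : (↑w⁻¹ * b) * a = 1 := by
      rw [mul_assoc, ← hw, Units.inv_mul]
    have heq : (↑w⁻¹ * b : R) = b * ↑v⁻¹ := by
      calc (↑w⁻¹ * b : R) = (↑w⁻¹ * b) * (a * (b * ↑v⁻¹)) := by rw [hright, mul_one]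
      _ = ((↑w⁻¹ * b) * a) * (b * ↑v⁻¹) := by simp only [mul_assoc]
      _ = b * ↑v⁻¹ := by rw [hleft, one_mul]
    exact ⟨⟨a, b * ↑v⁻¹, hright, heq ▸ hleft⟩, rfl⟩
  constructor
  · intro hR
    constructor
    · -- J is nil
      intro x hx
      by_cases hu : IsUnit x
      · obtain ⟨u, hu'⟩ := hu
        have h1 : (1 : R) ∈ J := by
          have := J.mul_mem_right x (↑u⁻¹) hx
          rwa [← hu', Units.mul_inv] at this
        have h0 : IsUnit (0 : R) := by
          have := isUnit_one_sub_of_mem J (fun y hy => (hJ y).1 hy) h1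
          simpa using this
        have h01 : (0 : R) = 1 := isUnit_zero_iff.mp h0
        exact ⟨1, by rw [pow_one, ← mul_one x, ← h01, mul_zero]⟩
      · rcases (isSWNC_iff x).1 (hR x hu) with h | h
        · obtain ⟨u, hu'⟩ := isUnit_one_sub_of_mem J (fun y hy => (hJ y).1 hy) hx
          have hcu : Commute x (↑u : R) := by
            rw [hu']; exact (Commute.one_right x).sub_right (Commute.refl x)
          have hx1 : x = (x - x ^ 2) * ↑u⁻¹ := by
            have h6 : x - x ^ 2 = x * ↑u := by rw [hu', mul_one_sub, pow_two]
            rw [h6, mul_assoc, Units.mul_inv, mul_one]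
          rw [hx1]
          exact ((hcu.sub_left (hcu.pow_left 2)).units_inv_right).isNilpotent_mul_right h
        · obtain ⟨u, hu'⟩ := isUnit_one_sub_of_mem J (fun y hy => (hJ y).1 hy) (J.neg_mem hx)
          rw [sub_neg_eq_add] at hu'
          have hcu : Commute x (↑u : R) := by
            rw [hu']; exact (Commute.one_right x).add_right (Commute.refl x)
          have hx1 : x = (x + x ^ 2) * ↑u⁻¹ := by
            have h6 : x + x ^ 2 = x * ↑u := by rw [hu', mul_one_add, pow_two]
            rw [h6, mul_assoc, Units.mul_inv, mul_one]
          rw [hx1]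
          exact ((hcu.add_left (hcu.pow_left 2)).units_inv_right).isNilpotent_mul_right h
    · -- quotient is GSWNC
      intro b hb
      obtain ⟨a, rfl⟩ := hsurj b
      have ha : ¬ IsUnit a := fun h => hb (h.map f)
      rcases (isSWNC_iff a).1 (hR a ha) with h | h
      · exact (isSWNC_iff (f a)).2 (Or.inl (by
          have := h.map f
          simpa [map_sub, map_pow] using this))
      · exact (isSWNC_iff (f a)).2 (Or.inr (by
          have := h.map f
          simpa [map_add, map_pow] using this))
  · rintro ⟨hnil, hQ⟩ a ha
    have hfa : ¬ IsUnit (f a) := fun h => ha (hunit a h)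
    have key : ∀ x : R, IsNilpotent (f x) → IsNilpotent x := by
      rintro x ⟨n, hn⟩
      have hxn : x ^ n ∈ J := by
        rw [← hker, map_pow, hn]
      obtain ⟨m, hm⟩ := hnil _ hxn
      exact ⟨n * m, by rw [pow_mul, hm]⟩
    rcases (isSWNC_iff (f a)).1 (hQ (f a) hfa) with h | h
    · refine (isSWNC_iff a).2 (Or.inl (key _ ?_))
      simpa [map_sub, map_pow] using h
    · refine (isSWNC_iff a).2 (Or.inr (key _ ?_))
      simpa [map_add, map_pow] using h
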